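/- Let x ∈ {0,1}^ℕ and let X = O(x) be the subshift generated by x. Then P_{111}(W(X)) equals the set of triples (a, b, c) ∈ ℕ³ with a < b < c for which there exist natural numbers n_{def}, one for each (d, e, f) ∈ {0,1}³, such that: (1) for all d, e, f ∈ {0,1}: x[n_{def} + a] = d, x[n_{def} + b] = e, and x[n_{def} + c] = f; (2) for every i with 0 ≤ i < a, the eight values x[n_{def} + i] (d, e, f ∈ {0,1}) are all equal; (3) for every i with a < i < b, the four values x[n_{0ef} + i] (e, f ∈ {0,1}) are all equal and the four values x[n_{1ef} + i] (e, f ∈ {0,1}) are all equal; and (4) for every i with b < i < c, x[n_{de0} + i] = x[n_{de1} + i] for all d, e ∈ {0,1}. -/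

import Mathlib

open scoped BigOperators

/-- A language is regular if it is accepted by a DFA with finitely many states. -/
def IsRegularLang {α : Type*} (L : Set (List α)) : Prop :=
  ∃ (σ : Type) (_ : Fintype σ) (M : DFA α σ), ∀ w : List α, w ∈ M.accepts ↔ w ∈ L

/-- Pad a word over `A` to length `M` by prepending the padding symbol `none`. -/
def padOne {A : Type*} (M : ℕ) (w : List A) : List (Option A) :=
  List.replicate (M - w.length) none ++ w.map some

/-- The padded form of a `d`-tuple of words over `A`, as a word over `(A ∪ {#})^d`. -/
def padTuple {A : Type*} {d : ℕ} (ws : Fin d → List A) : List (Fin d → Option A) :=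
  List.ofFn fun j : Fin (Finset.univ.sup fun i : Fin d => (ws i).length) =>
    fun i : Fin d =>
      (padOne (Finset.univ.sup fun i : Fin d => (ws i).length) (ws i)).getD j.val none

/-- An abstract numeration system over the alphabet `A`, encoded by the order isomorphism
`rep : ℕ → L ⊆ A*` enumerating its (infinite) language in increasing order. -/
structure ANS (A : Type*) where
  rep : ℕ → List A
  inj : Function.Injective rep

/-- A set `Y ⊆ ℕ^d` is `S`-recognizable if the padded representations of its members form
a regular language. -/
def ANS.Recognizable {A : Type*} (S : ANS A) {d : ℕ} (Y : Set (Fin d → ℕ)) : Prop :=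
  IsRegularLang { w : List (Fin d → Option A) | ∃ t ∈ Y, w = padTuple fun i => S.rep (t i) }

/-- An ANS is addable if the graph of addition is `S`-recognizable. -/
def ANS.Addable {A : Type*} (S : ANS A) : Prop :=
  S.Recognizable { t : Fin 3 → ℕ | t 0 + t 1 = t 2 }

/-- An ANS is comparable if the relation `≤` is `S`-recognizable. -/
def ANS.Comparable {A : Type*} (S : ANS A) : Prop :=
  S.Recognizable { t : Fin 2 → ℕ | t 0 ≤ t 1 }

/-- An ANS is regular if `ℕ` (i.e. its language) is `S`-recognizable. -/
def ANS.IsRegularANS {A : Type*} (S : ANS A) : Prop :=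
  S.Recognizable (Set.univ : Set (Fin 1 → ℕ))

/-- The unary ANS, with language `0*` ordered by length. -/
def unaryANS : ANS Unit where
  rep := fun n => List.replicate n ()
  inj := fun m n h => by simpa using congrArg List.length h

/-- `x` is `S`-automatic: some DFAO outputs `x n` on input `rep_S n`. -/
def SAutomatic {A C : Type*} (S : ANS A) (x : ℕ → C) : Prop :=
  ∃ (Q : Type) (_ : Fintype Q) (M : DFA A Q) (τ : Q → C),
    ∀ n : ℕ, τ (M.eval (S.rep n)) = x n

/-- The shift map on one-sided infinite words. -/
def shiftMap {C : Type*} (x : ℕ → C) : ℕ → C := fun n => x (n + 1)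

/-- The orbit closure of `x` (closure in the product topology over the discrete alphabet):
`y` belongs to it iff every finite prefix of `y` occurs in `x`. -/
def orbitClosure {C : Type*} (x : ℕ → C) : Set (ℕ → C) :=
  { y | ∀ n : ℕ, ∃ m : ℕ, ∀ i < n, y i = x (m + i) }

/-- A subshift: a shift-invariant subset of `C^ℕ` that is closed in the product topology
over the discrete alphabet (expressed combinatorially). -/
def IsSubshift {C : Type*} (X : Set (ℕ → C)) : Prop :=
  (∀ x ∈ X, shiftMap x ∈ X) ∧
  ∀ y : ℕ → C, (∀ n : ℕ, ∃ x ∈ X, ∀ i < n, y i = x i) → y ∈ X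

/-- The language of a set of infinite words: all finite factors of its elements. -/
def LangOf {C : Type*} (X : Set (ℕ → C)) : Set (List C) :=
  { w | ∃ x ∈ X, ∃ p : ℕ, w = List.ofFn fun i : Fin w.length => x (p + i) }

/-- A word is right special in (the language of) `X` if it has two distinct one-letter
extensions in the language of `X`. -/
def RightSpecial {C : Type*} (X : Set (ℕ → C)) (w : List C) : Prop :=
  ∃ a b : C, a ≠ b ∧ w ++ [a] ∈ LangOf X ∧ w ++ [b] ∈ LangOf X

/-- The factor complexity of `x`: the number of distinct factors of length `n`. -/
noncomputable def factorComplexity {C : Type*} (x : ℕ → C) (n : ℕ) : ℕ :=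
  Set.ncard { w : List C | ∃ p : ℕ, w = List.ofFn fun i : Fin n => x (p + i) }

/-- `T` is a strategy tree witnessing `α ∈ W(X)`: a prefix-closed set of finite words
containing the empty word, in which every word of length `i` has exactly `α i + 1`
one-letter extensions, and all whose infinite branches lie in `X`. -/
def IsStrategyTree {C : Type*} (X : Set (ℕ → C)) (α : ℕ → ℕ) (T : Set (List C)) : Prop :=
  ([] : List C) ∈ T ∧
  (∀ u v : List C, u ++ v ∈ T → u ∈ T) ∧
  (∀ w ∈ T, Set.ncard { c : C | w ++ [c] ∈ T } = α w.length + 1) ∧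
  (∀ y : ℕ → C, (∀ n : ℕ, (List.ofFn fun i : Fin n => y i) ∈ T) → y ∈ X)

/-- The winning shift of `X ⊆ C^ℕ`, a subset of `ℕ^ℕ`. -/
def winningShift {C : Type*} (X : Set (ℕ → C)) : Set (ℕ → ℕ) :=
  { α | ∃ T : Set (List C), IsStrategyTree X α T }

/-- Membership in the winning set of a set `X` of finite words, defined recursively:
`ε ∈ W(X)` iff `ε ∈ X`, and `a :: α ∈ W(X)` iff there is a set of `a + 1` letters `c`
such that `α` is in the winning set of the left quotient of `X` by `c`. -/
def winningSetMem {C : Type*} : List ℕ → Set (List C) → Prop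
  | [], X => [] ∈ X
  | a :: α, X => ∃ S : Finset C, S.card = a + 1 ∧ ∀ c ∈ S, winningSetMem α { w | c :: w ∈ X }

/-- `Σ y = m`: the sum of the letters of `y ∈ ℕ^ℕ` is finite and equals `m`. -/
def sumEq (y : ℕ → ℕ) (m : ℕ) : Prop :=
  (Function.support y).Finite ∧ ∑ᶠ i, y i = m

/-- `Y ⊆ ℕ^ℕ` has finite coding dimension: the sums `Σ y`, `y ∈ Y`, are uniformly bounded. -/
def FiniteCodingDim (Y : Set (ℕ → ℕ)) : Prop :=
  ∃ d : ℕ, ∀ y ∈ Y, ∀ F : Finset ℕ, ∑ i ∈ F, y i ≤ d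

/-- The set `{ν(y) : y ∈ Y, Σy = k} ⊆ ℕᵏ`: nondecreasing `k`-tuples `t` such that the word
whose letter at `j` is the number of occurrences of `j` in `t` belongs to `Y`. -/
def nuSet (Y : Set (ℕ → ℕ)) (k : ℕ) : Set (Fin k → ℕ) :=
  { t | Monotone t ∧ (fun j => Set.ncard { i : Fin k | t i = j }) ∈ Y }

/-- `Y ⊆ ℕ^ℕ` is weakly `S`-codable if `{ν(y) : y ∈ Y, Σy = k}` is `S`-recognizable for
every `k`. -/
def WeaklySCodable {A : Type*} (S : ANS A) (Y : Set (ℕ → ℕ)) : Prop :=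
  ∀ k : ℕ, S.Recognizable (nuSet Y k)

/-- `Y ⊆ ℕ^ℕ` is `S`-codable if it is weakly `S`-codable and has finite coding dimension. -/
def SCodable {A : Type*} (S : ANS A) (Y : Set (ℕ → ℕ)) : Prop :=
  WeaklySCodable S Y ∧ FiniteCodingDim Y

/-- `P_{111}(Y)`: strictly increasing triples `(a, b, c)` such that the word with letter `1`
exactly at positions `a`, `b`, `c` and `0` elsewhere belongs to `Y`. -/
def P111 (Y : Set (ℕ → ℕ)) : Set (Fin 3 → ℕ) :=
  { t | t 0 < t 1 ∧ t 1 < t 2 ∧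
        (fun j => if j = t 0 ∨ j = t 1 ∨ j = t 2 then 1 else 0) ∈ Y }

/-- `P_v(Y)` for a finite word `v` over `ℕ`: strictly increasing tuples `n` such that the
word with letter `v i` at position `n i` and `0` elsewhere belongs to `Y`. -/
def PvSet (v : List ℕ) (Y : Set (ℕ → ℕ)) : Set (Fin v.length → ℕ) :=
  { n | StrictMono n ∧
        (fun j => ∑ i : Fin v.length, if n i = j then v.get i else 0) ∈ Y }

/-- `X` is sofic: the set of label sequences of right-infinite paths in a finite
edge-labeled graph. -/
def IsSofic {C : Type*} (X : Set (ℕ → C)) : Prop :=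
  ∃ (V : Type) (_ : Fintype V) (E : Set (V × C × V)),
    X = { x | ∃ p : ℕ → V, ∀ n : ℕ, (p n, x n, p (n + 1)) ∈ E }

/-- The factor `x[a..b-1]` of an infinite word. -/
def segmentOf {C : Type*} (x : ℕ → C) (a b : ℕ) : List C :=
  List.ofFn fun i : Fin (b - a) => x (a + i)

/-- `U · V^ω`: infinite words that decompose as a word of `U` followed by infinitely many
nonempty words of `V`. -/
def omegaIter {C : Type*} (U V : Set (List C)) : Set (ℕ → C) :=
  { x | ∃ k : ℕ → ℕ, StrictMono k ∧ segmentOf x 0 (k 0) ∈ U ∧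
        ∀ i : ℕ, segmentOf x (k i) (k (i + 1)) ∈ V }

/-- `X ⊆ C^ℕ` is ω-regular: a finite union of sets `U · V^ω` with `U`, `V` regular. -/
def IsOmegaRegular {C : Type*} (X : Set (ℕ → C)) : Prop :=
  ∃ (n : ℕ) (U V : Fin n → Set (List C)),
    (∀ i, IsRegularLang (U i) ∧ IsRegularLang (V i)) ∧
    X = ⋃ i, omegaIter (U i) (V i)

/-- The words `p₁ = a`, `p_{k+1} = p_k bᵏ p_k` (with `a = false`, `b = true`). -/
def pWord : ℕ → List Bool
  | 0 => []
  | 1 => [false]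
  | (k + 2) => pWord (k + 1) ++ List.replicate (k + 1) true ++ pWord (k + 1)

/-- Combinatorial continuity of `φ` on `Y` for product topologies over discrete alphabets:
every finite prefix of `φ y` is determined by a finite prefix of `y`. -/
def ContOn {B C : Type*} (φ : (ℕ → B) → (ℕ → C)) (Y : Set (ℕ → B)) : Prop :=
  ∀ y ∈ Y, ∀ n : ℕ, ∃ m : ℕ, ∀ y' ∈ Y, (∀ i < m, y' i = y i) → ∀ i < n, φ y' i = φ y i


lemma aux_getD_append (u v : List Bool) {i : ℕ} (h : i < u.length) :
    (u ++ v).getD i false = u.getD i false := by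
  rw [List.getD_eq_getElem _ _ (by rw [List.length_append]; omega),
    List.getD_eq_getElem _ _ h, List.getElem_append_left h]

lemma aux_getD_snoc (u : List Bool) (c : Bool) : (u ++ [c]).getD u.length false = c := by
  rw [List.getD_eq_getElem _ _ (by rw [List.length_append]; simp)]
  exact List.getElem_concat_length (l := u) (a := c) (i := u.length) rfl _

/-- `w` is a prefix of the infinite word `i ↦ x (m + i)`. -/
def PrefX (x : ℕ → Bool) (m : ℕ) (w : List Bool) : Prop :=
  ∀ i < w.length, w.getD i false = x (m + i)

lemma prefX_prefix {x : ℕ → Bool} {m : ℕ} {u v : List Bool} (h : PrefX x m (u ++ v)) :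
    PrefX x m u := by
  intro i hi
  rw [← aux_getD_append u v hi]
  exact h i (by rw [List.length_append]; omega)

lemma prefX_last {x : ℕ → Bool} {m : ℕ} {c : Bool} {w : List Bool}
    (h : PrefX x m (w ++ [c])) : c = x (m + w.length) := by
  have h' := h w.length (by rw [List.length_append]; simp)
  rwa [aux_getD_snoc] at h'

lemma prefX_snoc {x : ℕ → Bool} {m : ℕ} {w : List Bool} (h : PrefX x m w) :
    PrefX x m (w ++ [x (m + w.length)]) := by
  intro i hi
  rw [List.length_append, List.length_singleton] at hi
  rcases Nat.lt_or_ge i w.length with h' | h'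
  · rw [aux_getD_append w _ h']
    exact h i h'
  · have hiw : i = w.length := by omega
    subst hiw
    rw [aux_getD_snoc]

lemma prefX_agree {x : ℕ → Bool} {m m' : ℕ} {w : List Bool} (h : PrefX x m w)
    (h' : PrefX x m' w) : ∀ i < w.length, x (m + i) = x (m' + i) :=
  fun i hi => (h i hi).symm.trans (h' i hi)

lemma bool_pair {P : Bool → Prop} (h : Set.ncard {c : Bool | P c} = 2) : ∀ c, P c := by
  obtain ⟨u, v, huv, hs⟩ := Set.ncard_eq_two.mp h
  intro c
  have hc : c ∈ ({u, v} : Set Bool) := by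
    rcases c <;> rcases u <;> rcases v <;> simp_all
  rw [← hs] at hc
  exact hc

lemma aux_extend {T : Set (List Bool)} (hne : ∀ w ∈ T, ∃ c : Bool, w ++ [c] ∈ T) :
    ∀ (k : ℕ), ∀ w ∈ T, ∃ v : List Bool, v.length = k ∧ w ++ v ∈ T := by
  intro k
  induction k with
  | zero => exact fun w hw => ⟨[], rfl, by simpa using hw⟩
  | succ k ih =>
    intro w hw
    obtain ⟨v, hv, hvT⟩ := ih w hw
    obtain ⟨c, hc⟩ := hne _ hvT
    refine ⟨v ++ [c], by rw [List.length_append, List.length_singleton, hv], ?_⟩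
    rw [← List.append_assoc]; exact hc

lemma aux_branch {T : Set (List Bool)}
    (hne : ∀ w ∈ T, ∃ c : Bool, w ++ [c] ∈ T)
    (hpc : ∀ u v : List Bool, u ++ v ∈ T → u ∈ T)
    {w : List Bool} (hw : w ∈ T) :
    ∃ z : ℕ → Bool, (∀ m, (List.ofFn fun i : Fin m => z i) ∈ T) ∧
      ∀ i < w.length, z i = w.getD i false := by
  classical
  have hstep : ∀ p : {u : List Bool // u ∈ T}, ∃ c : Bool, p.1 ++ [c] ∈ T :=
    fun p => hne p.1 p.2
  choose bf hbf using hstep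
  let F : ℕ → {u : List Bool // u ∈ T} :=
    fun k => (fun p => (⟨p.1 ++ [bf p], hbf p⟩ : {u : List Bool // u ∈ T}))^[k] ⟨w, hw⟩
  have hF0 : (F 0).1 = w := rfl
  have hFsucc : ∀ k, (F (k + 1)).1 = (F k).1 ++ [bf (F k)] :=
    fun k => congrArg Subtype.val (Function.iterate_succ_apply' _ k _)
  have hFlen : ∀ k, (F k).1.length = w.length + k := by
    intro k
    induction k with
    | zero => rw [hF0]; omega
    | succ k ih => rw [hFsucc, List.length_append, List.length_singleton, ih]; omega
  have hFmono : ∀ j k, j ≤ k → ∀ i, i < (F j).1.length →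
      (F k).1.getD i false = (F j).1.getD i false := by
    intro j k hjk
    induction k, hjk using Nat.le_induction with
    | base => intro i _; rfl
    | succ m hm ih =>
      intro i hi
      have hi' : i < (F m).1.length := by
        have h1 := hFlen j; have h2 := hFlen m
        omega
      rw [hFsucc, aux_getD_append _ _ hi', ih i hi]
  refine ⟨fun i => (F (i + 1)).1.getD i false, ?_, ?_⟩
  · intro m
    have hmem : (F m).1.take m ∈ T := by
      have h := (F m).2
      rw [← List.take_append_drop m (F m).1] at h
      exact hpc _ _ h
    have heq : (List.ofFn fun i : Fin m => (F (↑i + 1)).1.getD ↑i false) = (F m).1.take m := by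
      apply List.ext_getElem
      · rw [List.length_ofFn, List.length_take, hFlen]; omega
      · intro i h1 h2
        rw [List.getElem_ofFn, List.getElem_take]
        have hi : i < (F m).1.length := by
          rw [hFlen]; rw [List.length_ofFn] at h1; omega
        rw [← List.getD_eq_getElem _ false hi]
        rcases Nat.le_total m (i + 1) with h | h
        · exact hFmono m (i + 1) h i hi
        · exact (hFmono (i + 1) m h i (by rw [hFlen]; omega)).symm
    rw [heq]; exact hmem
  · intro i hi
    have h := hFmono 0 (i + 1) (Nat.zero_le _) i (by rw [hF0]; exact hi)
    rw [hF0] at h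
    exact h

/-- For `x ∈ {0,1}^ℕ` (with `0 = false`, `1 = true`) and `X = O(x)`,
the set `P_{111}(W(X))` equals the set of strictly increasing triples `(a, b, c)` for which
there exist positions `n_{def}`, `(d,e,f) ∈ {0,1}³`, satisfying conditions (1)–(4). -/
theorem stmt3 (x : ℕ → Bool) :
    P111 (winningShift (orbitClosure x)) =
      { t : Fin 3 → ℕ | t 0 < t 1 ∧ t 1 < t 2 ∧
          ∃ n : Bool → Bool → Bool → ℕ,
            (∀ d e f : Bool,
              x (n d e f + t 0) = d ∧ x (n d e f + t 1) = e ∧ x (n d e f + t 2) = f) ∧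
            (∀ i < t 0, ∀ d e f d' e' f' : Bool, x (n d e f + i) = x (n d' e' f' + i)) ∧
            (∀ i : ℕ, t 0 < i → i < t 1 →
              ∀ d e f e' f' : Bool, x (n d e f + i) = x (n d e' f' + i)) ∧
            (∀ i : ℕ, t 1 < i → i < t 2 →
              ∀ d e f f' : Bool, x (n d e f + i) = x (n d e f' + i)) } := by
  ext t
  simp only [P111, winningShift, Set.mem_setOf_eq]
  constructor
  · rintro ⟨h01, h12, T, hT⟩
    refine ⟨h01, h12, ?_⟩
    obtain ⟨hnil, hpc, hcount, hbr⟩ := hT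
    have hne : ∀ w ∈ T, ∃ c : Bool, w ++ [c] ∈ T := by
      intro w hw
      have h := hcount w hw
      have hnonempty : {c : Bool | w ++ [c] ∈ T}.Nonempty :=
        Set.nonempty_of_ncard_ne_zero (by rw [h]; exact Nat.succ_ne_zero _)
      exact hnonempty
    -- the common prefix of length t 0
    obtain ⟨u, hul, huT⟩ := aux_extend hne (t 0) [] hnil
    rw [List.nil_append] at huT
    -- first branching
    have hu2 : ∀ d : Bool, u ++ [d] ∈ T := by
      have h := hcount u huT
      simp only [hul, true_or, or_true, if_true] at h
      exact bool_pair (by omega)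
    -- extend to length t 1
    have hv : ∀ d : Bool, ∃ vv : List Bool, vv.length = t 1 ∧ vv ∈ T ∧
        ∀ i < t 0 + 1, vv.getD i false = (u ++ [d]).getD i false := by
      intro d
      obtain ⟨r, hr, hrT⟩ := aux_extend hne (t 1 - (t 0 + 1)) (u ++ [d]) (hu2 d)
      refine ⟨(u ++ [d]) ++ r, ?_, hrT, ?_⟩
      · rw [List.length_append, List.length_append, List.length_singleton, hul, hr]; omega
      · intro i hi
        exact aux_getD_append (u ++ [d]) r
          (by rw [List.length_append, List.length_singleton, hul]; omega)
    choose v hvl hvT hvu using hv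
    -- second branching
    have hv2 : ∀ d e : Bool, v d ++ [e] ∈ T := by
      intro d
      have h := hcount (v d) (hvT d)
      simp only [hvl, true_or, or_true, if_true] at h
      exact bool_pair (by omega)
    -- extend to length t 2
    have hWex : ∀ d e : Bool, ∃ ww : List Bool, ww.length = t 2 ∧ ww ∈ T ∧
        ∀ i < t 1 + 1, ww.getD i false = (v d ++ [e]).getD i false := by
      intro d e
      obtain ⟨r, hr, hrT⟩ := aux_extend hne (t 2 - (t 1 + 1)) (v d ++ [e]) (hv2 d e)
      refine ⟨(v d ++ [e]) ++ r, ?_, hrT, ?_⟩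
      · rw [List.length_append, List.length_append, List.length_singleton, hvl, hr]; omega
      · intro i hi
        exact aux_getD_append (v d ++ [e]) r
          (by rw [List.length_append, List.length_singleton, hvl]; omega)
    choose W hWl hWT hWv using hWex
    -- third branching
    have hW2 : ∀ d e f : Bool, W d e ++ [f] ∈ T := by
      intro d e
      have h := hcount (W d e) (hWT d e)
      simp only [hWl, true_or, or_true, if_true] at h
      exact bool_pair (by omega)
    -- infinite branches give occurrences in x
    have hz : ∀ d e f : Bool, ∃ m : ℕ, ∀ i < t 2 + 1,
        x (m + i) = (W d e ++ [f]).getD i false := by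
      intro d e f
      obtain ⟨z, hzT, hzw⟩ := aux_branch hne hpc (hW2 d e f)
      have hzX : z ∈ orbitClosure x := hbr z hzT
      obtain ⟨m, hm⟩ := hzX (t 2 + 1)
      refine ⟨m, fun i hi => ?_⟩
      rw [← hm i hi]
      exact hzw i (by rw [List.length_append, List.length_singleton, hWl]; omega)
    choose nn hnn using hz
    have key1 : ∀ d e f : Bool, ∀ i < t 1 + 1,
        x (nn d e f + i) = (v d ++ [e]).getD i false := by
      intro d e f i hi
      rw [hnn d e f i (by omega),
        aux_getD_append (W d e) [f] (by rw [hWl]; omega),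
        hWv d e i hi]
    have key0 : ∀ d e f : Bool, ∀ i < t 0 + 1,
        x (nn d e f + i) = (u ++ [d]).getD i false := by
      intro d e f i hi
      rw [key1 d e f i (by omega),
        aux_getD_append (v d) [e] (by rw [hvl]; omega),
        hvu d i hi]
    refine ⟨nn, ?_, ?_, ?_, ?_⟩
    · intro d e f
      refine ⟨?_, ?_, ?_⟩
      · rw [key0 d e f (t 0) (by omega), ← hul]
        exact aux_getD_snoc u d
      · rw [key1 d e f (t 1) (by omega), ← hvl d]
        exact aux_getD_snoc (v d) e
      · rw [hnn d e f (t 2) (by omega), ← hWl d e]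
        exact aux_getD_snoc (W d e) f
    · intro i hi d e f d' e' f'
      rw [key0 d e f i (by omega), key0 d' e' f' i (by omega),
        aux_getD_append u [d] (by omega), aux_getD_append u [d'] (by omega)]
    · intro i hi0 hi1 d e f e' f'
      rw [key1 d e f i (by omega), key1 d e' f' i (by omega),
        aux_getD_append (v d) [e] (by rw [hvl]; omega),
        aux_getD_append (v d) [e'] (by rw [hvl]; omega)]
    · intro i hi1 hi2 d e f f'
      rw [hnn d e f i (by omega), hnn d e f' i (by omega),
        aux_getD_append (W d e) [f] (by rw [hWl]; omega),
        aux_getD_append (W d e) [f'] (by rw [hWl]; omega)]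
  · rintro ⟨h01, h12, n, h1, h2, h3, h4⟩
    refine ⟨h01, h12, ?_⟩
    have hag1 : ∀ i < t 1, ∀ d e f e' f' : Bool, x (n d e f + i) = x (n d e' f' + i) := by
      intro i hi d e f e' f'
      rcases Nat.lt_trichotomy i (t 0) with h | h | h
      · exact h2 i h d e f d e' f'
      · rw [h, (h1 d e f).1, (h1 d e' f').1]
      · exact h3 i h hi d e f e' f'
    have hag2 : ∀ i < t 2, ∀ d e f f' : Bool, x (n d e f + i) = x (n d e f' + i) := by
      intro i hi d e f f'
      rcases Nat.lt_trichotomy i (t 1) with h | h | h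
      · exact hag1 i h d e f e f'
      · rw [h, (h1 d e f).2.1, (h1 d e f').2.1]
      · exact h4 i h hi d e f f'
    refine ⟨{w | ∃ d e f : Bool, PrefX x (n d e f) w}, ?_, ?_, ?_, ?_⟩
    · exact ⟨false, false, false, fun i hi => absurd hi (by simp)⟩
    · rintro u v ⟨d, e, f, hp⟩
      exact ⟨d, e, f, prefX_prefix hp⟩
    · intro w hw
      obtain ⟨d, e, f, hp⟩ := hw
      show Set.ncard {c | w ++ [c] ∈ {w | ∃ d e f : Bool, PrefX x (n d e f) w}} =
        (if w.length = t 0 ∨ w.length = t 1 ∨ w.length = t 2 then 1 else 0) + 1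
      rcases Nat.lt_trichotomy w.length (t 0) with hL | hL | hL
      · -- before the first branching point
        have hset : {c | w ++ [c] ∈ {w | ∃ d e f : Bool, PrefX x (n d e f) w}} =
            {x (n d e f + w.length)} := by
          ext c'
          simp only [Set.mem_setOf_eq, Set.mem_singleton_iff]
          constructor
          · rintro ⟨d', e', f', hp'⟩
            rw [prefX_last hp']
            exact h2 w.length hL d' e' f' d e f
          · rintro rfl
            exact ⟨d, e, f, prefX_snoc hp⟩
        rw [hset, Set.ncard_singleton, if_neg (by omega)]
      · -- at the first branching point
        have hset : {c | w ++ [c] ∈ {w | ∃ d e f : Bool, PrefX x (n d e f) w}} =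
            (Set.univ : Set Bool) := by
          ext c'
          simp only [Set.mem_setOf_eq, Set.mem_univ, iff_true]
          have hp2 : PrefX x (n c' e f) w := by
            intro i hi
            rw [hp i hi]
            exact h2 i (by omega) d e f c' e f
          have h5 := prefX_snoc hp2
          have hx : x (n c' e f + w.length) = c' := by rw [hL]; exact (h1 c' e f).1
          rw [hx] at h5
          exact ⟨c', e, f, h5⟩
        rw [hset, Set.ncard_univ, Nat.card_eq_fintype_card, Fintype.card_bool,
          if_pos (Or.inl hL)]
      · rcases Nat.lt_trichotomy w.length (t 1) with hM | hM | hM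
        · -- between the first and second branching points
          have hset : {c | w ++ [c] ∈ {w | ∃ d e f : Bool, PrefX x (n d e f) w}} =
              {x (n d e f + w.length)} := by
            ext c'
            simp only [Set.mem_setOf_eq, Set.mem_singleton_iff]
            constructor
            · rintro ⟨d', e', f', hp'⟩
              have hagr := prefX_agree hp (prefX_prefix hp')
              have hd : d = d' := by
                have h6 := hagr (t 0) (by omega)
                rwa [(h1 d e f).1, (h1 d' e' f').1] at h6
              rw [prefX_last hp', ← hd]
              exact (hag1 w.length hM d e f e' f').symm
            · rintro rfl
              exact ⟨d, e, f, prefX_snoc hp⟩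
          rw [hset, Set.ncard_singleton, if_neg (by omega)]
        · -- at the second branching point
          have hset : {c | w ++ [c] ∈ {w | ∃ d e f : Bool, PrefX x (n d e f) w}} =
              (Set.univ : Set Bool) := by
            ext c'
            simp only [Set.mem_setOf_eq, Set.mem_univ, iff_true]
            have hp2 : PrefX x (n d c' f) w := by
              intro i hi
              rw [hp i hi]
              exact hag1 i (by omega) d e f c' f
            have h5 := prefX_snoc hp2
            have hx : x (n d c' f + w.length) = c' := by rw [hM]; exact (h1 d c' f).2.1
            rw [hx] at h5
            exact ⟨d, c', f, h5⟩
          rw [hset, Set.ncard_univ, Nat.card_eq_fintype_card, Fintype.card_bool,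
            if_pos (Or.inr (Or.inl hM))]
        · rcases Nat.lt_trichotomy w.length (t 2) with hN | hN | hN
          · -- between the second and third branching points
            have hset : {c | w ++ [c] ∈ {w | ∃ d e f : Bool, PrefX x (n d e f) w}} =
                {x (n d e f + w.length)} := by
              ext c'
              simp only [Set.mem_setOf_eq, Set.mem_singleton_iff]
              constructor
              · rintro ⟨d', e', f', hp'⟩
                have hagr := prefX_agree hp (prefX_prefix hp')
                have hd : d = d' := by
                  have h6 := hagr (t 0) (by omega)
                  rwa [(h1 d e f).1, (h1 d' e' f').1] at h6
                have he : e = e' := by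
                  have h6 := hagr (t 1) (by omega)
                  rwa [(h1 d e f).2.1, (h1 d' e' f').2.1] at h6
                rw [prefX_last hp', ← hd, ← he]
                exact (hag2 w.length hN d e f f').symm
              · rintro rfl
                exact ⟨d, e, f, prefX_snoc hp⟩
            rw [hset, Set.ncard_singleton, if_neg (by omega)]
          · -- at the third branching point
            have hset : {c | w ++ [c] ∈ {w | ∃ d e f : Bool, PrefX x (n d e f) w}} =
                (Set.univ : Set Bool) := by
              ext c'
              simp only [Set.mem_setOf_eq, Set.mem_univ, iff_true]
              have hp2 : PrefX x (n d e c') w := by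
                intro i hi
                rw [hp i hi]
                exact hag2 i (by omega) d e f c'
              have h5 := prefX_snoc hp2
              have hx : x (n d e c' + w.length) = c' := by rw [hN]; exact (h1 d e c').2.2
              rw [hx] at h5
              exact ⟨d, e, c', h5⟩
            rw [hset, Set.ncard_univ, Nat.card_eq_fintype_card, Fintype.card_bool,
              if_pos (Or.inr (Or.inr hN))]
          · -- after the last branching point
            have hset : {c | w ++ [c] ∈ {w | ∃ d e f : Bool, PrefX x (n d e f) w}} =
                {x (n d e f + w.length)} := by
              ext c'
              simp only [Set.mem_setOf_eq, Set.mem_singleton_iff]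
              constructor
              · rintro ⟨d', e', f', hp'⟩
                have hagr := prefX_agree hp (prefX_prefix hp')
                have hd : d = d' := by
                  have h6 := hagr (t 0) (by omega)
                  rwa [(h1 d e f).1, (h1 d' e' f').1] at h6
                have he : e = e' := by
                  have h6 := hagr (t 1) (by omega)
                  rwa [(h1 d e f).2.1, (h1 d' e' f').2.1] at h6
                have hf : f = f' := by
                  have h6 := hagr (t 2) (by omega)
                  rwa [(h1 d e f).2.2, (h1 d' e' f').2.2] at h6
                rw [prefX_last hp', ← hd, ← he, ← hf]
              · rintro rfl
                exact ⟨d, e, f, prefX_snoc hp⟩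
            rw [hset, Set.ncard_singleton, if_neg (by omega)]
    · intro z hz
      show ∀ m, ∃ p, ∀ i < m, z i = x (p + i)
      intro m
      obtain ⟨d, e, f, hp⟩ := hz m
      refine ⟨n d e f, fun i hi => ?_⟩
      have hlen : i < (List.ofFn fun j : Fin m => z j).length := by
        rw [List.length_ofFn]; exact hi
      have h5 := hp i hlen
      rw [List.getD_eq_getElem _ _ hlen, List.getElem_ofFn] at h5
      exact h5
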